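/- Let d be an odd positive integer, and fix (α₁,β₁),…,(αᵢ,βᵢ) ∈ ZMod d × ZMod d with 1 ≤ i ≤ d, and a fiducial unit vector f ∈ ℂ^(ZMod d), such that the coherent states c(α₁,β₁),…,c(αᵢ,βᵢ) are linearly independent. Then the following resolution of the identity holds: (1/(i·d)) · Σ_{κ,λ ∈ ZMod d} Π(H(α₁+κ, β₁+λ) ⊔ ⋯ ⊔ H(αᵢ+κ, βᵢ+λ)) = 1, where 1 is the identity operator on ℂ^(ZMod d). -/

import Mathlib

open scoped BigOperators

variable {d : ℕ} [NeZero d]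

/-- `ω(m) = exp(2πi m/d)` for `m ∈ ℤ/d`. -/
noncomputable def omegaZ (d : ℕ) [NeZero d] (m : ZMod d) : ℂ :=
  Complex.exp (2 * Real.pi * Complex.I * (m.val : ℂ) / (d : ℂ))

/-- The displacement operator `D(α,β)`, determined by
`D(α,β) e_n = ω(α(n+β) − 2⁻¹αβ) e_{n+β}`, i.e.
`(D(α,β) f) m = ω(α m − 2⁻¹ α β) · f (m − β)`. -/
noncomputable def disp (α β : ZMod d) :
    EuclideanSpace ℂ (ZMod d) →ₗ[ℂ] EuclideanSpace ℂ (ZMod d) where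
  toFun f := WithLp.toLp 2 (fun m => omegaZ d (α * m - (2 : ZMod d)⁻¹ * α * β) * f (m - β))
  map_add' f g := by
    ext m
    simp [mul_add]
  map_smul' c f := by
    ext m
    simp only [PiLp.smul_apply, smul_eq_mul, RingHom.id_apply, PiLp.toLp_apply]
    ring

/-- The coherent state `c(α,β) = D(α,β) f` for a fiducial vector `f`. -/
noncomputable def cohState (f : EuclideanSpace ℂ (ZMod d)) (α β : ZMod d) :
    EuclideanSpace ℂ (ZMod d) :=
  disp α β f

/-- The one-dimensional subspace `H(α,β) = ℂ·c(α,β)`. -/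
noncomputable def cohSubspace (f : EuclideanSpace ℂ (ZMod d)) (α β : ZMod d) :
    Submodule ℂ (EuclideanSpace ℂ (ZMod d)) :=
  Submodule.span ℂ {cohState f α β}

/-- Orthogonal projection onto a subspace, as an operator. -/
noncomputable def projCoh (K : Submodule ℂ (EuclideanSpace ℂ (ZMod d))) :
    EuclideanSpace ℂ (ZMod d) →L[ℂ] EuclideanSpace ℂ (ZMod d) :=
  K.subtypeL.comp (K.orthogonalProjection)

noncomputable def zetaC (d : ℕ) : ℂ := Complex.exp (2 * Real.pi * Complex.I / d)

lemma zetaC_pow_d (d : ℕ) [NeZero d] : zetaC d ^ d = 1 := by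
  have hd : (d : ℂ) ≠ 0 := Nat.cast_ne_zero.2 (NeZero.ne d)
  rw [zetaC, ← Complex.exp_nat_mul]
  rw [show (d : ℂ) * (2 * Real.pi * Complex.I / d) = 2 * Real.pi * Complex.I by
    field_simp]
  exact Complex.exp_two_pi_mul_I

lemma omegaZ_eq (m : ZMod d) : omegaZ d m = zetaC d ^ m.val := by
  rw [zetaC, ← Complex.exp_nat_mul, omegaZ]
  ring_nf

lemma zetaC_pow_mod (n : ℕ) : zetaC d ^ (n % d) = zetaC d ^ n := by
  conv_rhs => rw [← Nat.mod_add_div n d, pow_add, pow_mul, zetaC_pow_d, one_pow, mul_one]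

lemma omegaZ_add (a b : ZMod d) : omegaZ d (a + b) = omegaZ d a * omegaZ d b := by
  rw [omegaZ_eq, omegaZ_eq, omegaZ_eq, ← pow_add, ZMod.val_add, zetaC_pow_mod]

lemma omegaZ_zero : omegaZ d 0 = 1 := by
  rw [omegaZ_eq, ZMod.val_zero, pow_zero]

lemma omegaZ_ne_zero (m : ZMod d) : omegaZ d m ≠ 0 := Complex.exp_ne_zero _

lemma norm_omegaZ (m : ZMod d) : ‖omegaZ d m‖ = 1 := by
  rw [omegaZ_eq, norm_pow, Complex.norm_eq_one_of_pow_eq_one (zetaC_pow_d d) (NeZero.ne d),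
    one_pow]

lemma sum_omegaZ (t : ZMod d) :
    ∑ κ : ZMod d, omegaZ d (κ * t) = if t = 0 then (d : ℂ) else 0 := by
  have hval : ∀ κ : ZMod d, omegaZ d (κ * t) = (zetaC d ^ t.val) ^ κ.val := by
    intro κ
    rw [omegaZ_eq, ZMod.val_mul, zetaC_pow_mod, ← pow_mul, mul_comm (κ.val), pow_mul]
  have hsum : ∑ κ : ZMod d, omegaZ d (κ * t)
      = ∑ n ∈ Finset.range d, (zetaC d ^ t.val) ^ n := by
    refine Finset.sum_bij (fun κ _ => κ.val) (fun κ _ => Finset.mem_range.2 (ZMod.val_lt κ))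
      (fun a _ b _ hab => ?_) (fun n hn => ?_) (fun κ _ => hval κ)
    · exact ZMod.val_injective d hab
    · exact ⟨(n : ZMod d), Finset.mem_univ _,
        ZMod.val_natCast_of_lt (Finset.mem_range.1 hn)⟩
  rw [hsum]
  split_ifs with h
  · subst h
    simp [ZMod.val_zero]
  · have ht : t.val ≠ 0 := fun h0 => h (by rwa [ZMod.val_eq_zero] at h0)
    have hz1 : zetaC d ^ t.val ≠ 1 := by
      intro h1
      have := (Complex.isPrimitiveRoot_exp d (NeZero.ne d)).pow_eq_one_iff_dvd t.val
      rw [show Complex.exp (2 * ↑Real.pi * Complex.I / ↑d) = zetaC d from rfl] at this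
      have hdvd := this.1 h1
      exact ht (Nat.eq_zero_of_dvd_of_lt hdvd (ZMod.val_lt t))
    rw [geom_sum_eq hz1, ← pow_mul, mul_comm, pow_mul, zetaC_pow_d, one_pow, sub_self,
      zero_div]

lemma disp_apply (α β : ZMod d) (g : EuclideanSpace ℂ (ZMod d)) (m : ZMod d) :
    disp α β g m = omegaZ d (α * m - (2 : ZMod d)⁻¹ * α * β) * g (m - β) := rfl

lemma two_inv_mul_two (hd : Odd d) : (2 : ZMod d)⁻¹ * 2 = 1 := by
  apply ZMod.inv_mul_of_unit
  have h2 : ((2 : ℕ) : ZMod d) = (2 : ZMod d) := by push_cast; ring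
  rw [← h2, ZMod.isUnit_iff_coprime]
  rw [Nat.Prime.coprime_iff_not_dvd Nat.prime_two]
  exact fun h => (Nat.not_even_iff_odd.mpr hd) (even_iff_two_dvd.mpr h)

lemma disp_disp (hd : Odd d) (κ lam α β : ZMod d) (g : EuclideanSpace ℂ (ZMod d)) :
    disp κ lam (disp α β g)
      = omegaZ d ((2 : ZMod d)⁻¹ * (κ * β - α * lam)) • disp (α + κ) (β + lam) g := by
  have h2 := two_inv_mul_two hd
  ext m
  show omegaZ d _ * (omegaZ d _ * g (m - lam - β)) = _
  rw [PiLp.smul_apply, smul_eq_mul, disp_apply, ← mul_assoc, ← mul_assoc,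
    ← omegaZ_add, ← omegaZ_add, sub_sub, add_comm lam β]
  congr 2
  linear_combination (α * lam) * h2

lemma disp_single (α β n : ZMod d) :
    disp α β (EuclideanSpace.single n (1 : ℂ))
      = omegaZ d (α * (n + β) - (2 : ZMod d)⁻¹ * α * β) •
          EuclideanSpace.single (n + β) (1 : ℂ) := by
  ext m
  rw [disp_apply, PiLp.smul_apply, smul_eq_mul, EuclideanSpace.single_apply,
    EuclideanSpace.single_apply]
  by_cases h : m = n + β
  · subst h
    simp
  · have h' : m - β ≠ n := fun hc => h (by rw [← hc]; ring)
    simp [h, h']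

lemma disp_inv_left (hd : Odd d) (α β : ZMod d) (g : EuclideanSpace ℂ (ZMod d)) :
    disp (-α) (-β) (disp α β g) = g := by
  rw [disp_disp hd]
  have : (2 : ZMod d)⁻¹ * ((-α) * β - α * (-β)) = 0 := by ring
  rw [this, omegaZ_zero, one_smul]
  ext m
  rw [disp_apply]
  have e1 : (α + -α) * m - (2 : ZMod d)⁻¹ * (α + -α) * (β + -β) = 0 := by ring
  have e2 : m - (β + -β) = m := by ring
  rw [e1, e2, omegaZ_zero, one_mul]

lemma disp_inv_right (hd : Odd d) (α β : ZMod d) (g : EuclideanSpace ℂ (ZMod d)) :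
    disp α β (disp (-α) (-β) g) = g := by
  rw [disp_disp hd]
  have : (2 : ZMod d)⁻¹ * (α * (-β) - (-α) * β) = 0 := by ring
  rw [this, omegaZ_zero, one_smul]
  ext m
  rw [disp_apply]
  have e1 : (-α + α) * m - (2 : ZMod d)⁻¹ * (-α + α) * (-β + β) = 0 := by ring
  have e2 : m - (-β + β) = m := by ring
  rw [e1, e2, omegaZ_zero, one_mul]

lemma norm_disp (α β : ZMod d) (g : EuclideanSpace ℂ (ZMod d)) :
    ‖disp α β g‖ = ‖g‖ := by
  rw [EuclideanSpace.norm_eq, EuclideanSpace.norm_eq]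
  congr 1
  rw [← Fintype.sum_equiv (Equiv.subRight β) _ (fun m => ‖g m‖ ^ 2)]
  intro m
  rw [disp_apply, norm_mul, norm_omegaZ, one_mul]
  rfl

noncomputable def dispU (hd : Odd d) (α β : ZMod d) :
    EuclideanSpace ℂ (ZMod d) ≃ₗᵢ[ℂ] EuclideanSpace ℂ (ZMod d) where
  toLinearEquiv := LinearEquiv.ofLinear (disp α β) (disp (-α) (-β))
    (LinearMap.ext fun g => disp_inv_right hd α β g)
    (LinearMap.ext fun g => disp_inv_left hd α β g)
  norm_map' := norm_disp α β

lemma dispU_apply (hd : Odd d) (α β : ZMod d) (g : EuclideanSpace ℂ (ZMod d)) :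
    dispU hd α β g = disp α β g := rfl

lemma dispU_symm_apply (hd : Odd d) (α β : ZMod d) (g : EuclideanSpace ℂ (ZMod d)) :
    (dispU hd α β).symm g = disp (-α) (-β) g := rfl

lemma map_cohSubspace (hd : Odd d) (f : EuclideanSpace ℂ (ZMod d)) (κ lam α β : ZMod d) :
    (cohSubspace f α β).map
        ((dispU hd κ lam).toLinearEquiv :
          EuclideanSpace ℂ (ZMod d) →ₗ[ℂ] EuclideanSpace ℂ (ZMod d))
      = cohSubspace f (α + κ) (β + lam) := by
  rw [cohSubspace, Submodule.map_span, Set.image_singleton]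
  have h1 : ((dispU hd κ lam).toLinearEquiv :
        EuclideanSpace ℂ (ZMod d) →ₗ[ℂ] EuclideanSpace ℂ (ZMod d)) (cohState f α β)
      = omegaZ d ((2 : ZMod d)⁻¹ * (κ * β - α * lam)) • cohState f (α + κ) (β + lam) := by
    show disp κ lam (disp α β f) = _
    rw [disp_disp hd]
    rfl
  rw [h1, cohSubspace]
  exact Submodule.span_singleton_smul_eq (IsUnit.mk0 _ (omegaZ_ne_zero _)) _

lemma isProj_projCoh (K : Submodule ℂ (EuclideanSpace ℂ (ZMod d))) :
    LinearMap.IsProj K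
      ((projCoh K : EuclideanSpace ℂ (ZMod d) →L[ℂ] EuclideanSpace ℂ (ZMod d)) :
        EuclideanSpace ℂ (ZMod d) →ₗ[ℂ] EuclideanSpace ℂ (ZMod d)) := by
  constructor
  · intro x
    exact (K.orthogonalProjection x).2
  · intro x hx
    exact Submodule.starProjection_eq_self_iff.mpr hx

lemma sum_proj_diag (K : Submodule ℂ (EuclideanSpace ℂ (ZMod d))) :
    ∑ p : ZMod d, projCoh K (EuclideanSpace.single p (1 : ℂ)) p
      = (Module.finrank ℂ K : ℂ) := by
  have htr := (isProj_projCoh K).trace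
  rw [LinearMap.trace_eq_matrix_trace ℂ (PiLp.basisFun 2 ℂ (ZMod d))] at htr
  rw [← htr, Matrix.trace]
  apply Finset.sum_congr rfl
  intro p _
  rw [Matrix.diag_apply, LinearMap.toMatrix_apply, PiLp.basisFun_repr, PiLp.basisFun_apply]
  rfl

lemma proj_conj_entry (hd : Odd d) (f : EuclideanSpace ℂ (ZMod d))
    (i : ℕ) (αβ : Fin i → ZMod d × ZMod d) (κ lam n m : ZMod d) :
    projCoh (⨆ j : Fin i, cohSubspace f ((αβ j).1 + κ) ((αβ j).2 + lam))
        (EuclideanSpace.single n (1 : ℂ)) m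
      = omegaZ d (κ * (m - n)) *
          projCoh (⨆ j : Fin i, cohSubspace f (αβ j).1 (αβ j).2)
            (EuclideanSpace.single (n - lam) (1 : ℂ)) (m - lam) := by
  have h2 := two_inv_mul_two hd
  set K0 := ⨆ j : Fin i, cohSubspace f (αβ j).1 (αβ j).2 with hK0
  have hmap : (⨆ j : Fin i, cohSubspace f ((αβ j).1 + κ) ((αβ j).2 + lam))
      = K0.map ((dispU hd κ lam).toLinearEquiv :
          EuclideanSpace ℂ (ZMod d) →ₗ[ℂ] EuclideanSpace ℂ (ZMod d)) := by
    rw [hK0, Submodule.map_iSup]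
    exact iSup_congr fun j => (map_cohSubspace hd f κ lam _ _).symm
  rw [hmap]
  show (Submodule.starProjection _ (EuclideanSpace.single n (1 : ℂ)) :
      EuclideanSpace ℂ (ZMod d)) m = _
  rw [Submodule.starProjection_map_apply]
  have e1 : (dispU hd κ lam).symm (EuclideanSpace.single n (1 : ℂ))
      = omegaZ d ((-κ) * (n + -lam) - (2 : ZMod d)⁻¹ * (-κ) * (-lam)) •
          EuclideanSpace.single (n + -lam) (1 : ℂ) := by
    rw [dispU_symm_apply, disp_single]
  rw [e1, map_smul, map_smul]
  rw [show n + -lam = n - lam from (sub_eq_add_neg n lam).symm]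
  rw [PiLp.smul_apply, smul_eq_mul, dispU_apply, disp_apply]
  rw [← mul_assoc, ← omegaZ_add]
  congr 1
  congr 1
  linear_combination (-(κ * lam)) * h2

lemma sum_eval {ι : Type*} (s : Finset ι) (v : ι → EuclideanSpace ℂ (ZMod d)) (m : ZMod d) :
    (∑ k ∈ s, v k) m = ∑ k ∈ s, v k m := by
  classical
  induction s using Finset.induction_on with
  | empty => rfl
  | insert _ _ h ih =>
    rw [Finset.sum_insert h, Finset.sum_insert h, ← ih]
    rfl

theorem coherent_resolution_of_identity
    (hd : Odd d) (hpos : 0 < d)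
    (i : ℕ) (hi1 : 1 ≤ i) (hid : i ≤ d)
    (αβ : Fin i → ZMod d × ZMod d)
    (f : EuclideanSpace ℂ (ZMod d)) (hf : ‖f‖ = 1)
    (hli : LinearIndependent ℂ fun j : Fin i => cohState f (αβ j).1 (αβ j).2) :
    (((i : ℂ) * (d : ℂ))⁻¹) •
      ∑ κ : ZMod d, ∑ lam : ZMod d,
        projCoh (⨆ j : Fin i, cohSubspace f ((αβ j).1 + κ) ((αβ j).2 + lam)) =
      (1 : EuclideanSpace ℂ (ZMod d) →L[ℂ] EuclideanSpace ℂ (ZMod d)) := by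
  set K0 := ⨆ j : Fin i, cohSubspace f (αβ j).1 (αβ j).2 with hK0
  have hrank : (Module.finrank ℂ K0 : ℂ) = (i : ℂ) := by
    have hsp : K0 = Submodule.span ℂ
        (Set.range fun j : Fin i => cohState f (αβ j).1 (αβ j).2) := by
      rw [hK0, Submodule.span_range_eq_iSup]
      rfl
    rw [hsp, finrank_span_eq_card hli, Fintype.card_fin]
  have hS : (∑ κ : ZMod d, ∑ lam : ZMod d,
      projCoh (⨆ j : Fin i, cohSubspace f ((αβ j).1 + κ) ((αβ j).2 + lam)))
      = ((i : ℂ) * (d : ℂ)) •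
          (1 : EuclideanSpace ℂ (ZMod d) →L[ℂ] EuclideanSpace ℂ (ZMod d)) := by
    apply ContinuousLinearMap.coe_injective
    apply Module.Basis.ext (PiLp.basisFun 2 ℂ (ZMod d))
    intro n
    rw [show ((PiLp.basisFun 2 ℂ (ZMod d)) n) = EuclideanSpace.single n (1 : ℂ) by
      rw [PiLp.basisFun_apply]]
    show (∑ κ : ZMod d, ∑ lam : ZMod d,
        projCoh (⨆ j : Fin i, cohSubspace f ((αβ j).1 + κ) ((αβ j).2 + lam)))
          (EuclideanSpace.single n (1 : ℂ))
      = (((i : ℂ) * (d : ℂ)) •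
          (1 : EuclideanSpace ℂ (ZMod d) →L[ℂ] EuclideanSpace ℂ (ZMod d)))
          (EuclideanSpace.single n (1 : ℂ))
    refine PiLp.ext fun m => ?_
    have hterm : ∀ κ : ZMod d, ((∑ lam : ZMod d,
        projCoh (⨆ j : Fin i, cohSubspace f ((αβ j).1 + κ) ((αβ j).2 + lam)))
          (EuclideanSpace.single n (1 : ℂ))) m
        = ∑ lam : ZMod d, omegaZ d (κ * (m - n)) *
            projCoh K0 (EuclideanSpace.single (n - lam) (1 : ℂ)) (m - lam) := by
      intro κ
      rw [ContinuousLinearMap.sum_apply, sum_eval]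
      exact Finset.sum_congr rfl fun lam _ => proj_conj_entry hd f i αβ κ lam n m
    rw [ContinuousLinearMap.sum_apply, sum_eval,
      Finset.sum_congr rfl fun κ _ => hterm κ, Finset.sum_comm]
    have hchar : ∀ lam : ZMod d, (∑ κ : ZMod d, omegaZ d (κ * (m - n)) *
        projCoh K0 (EuclideanSpace.single (n - lam) (1 : ℂ)) (m - lam))
        = (if (m - n) = 0 then (d : ℂ) else 0) *
            projCoh K0 (EuclideanSpace.single (n - lam) (1 : ℂ)) (m - lam) := by
      intro lam
      rw [← Finset.sum_mul, sum_omegaZ]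
    rw [Finset.sum_congr rfl fun lam _ => hchar lam]
    rw [ContinuousLinearMap.smul_apply, ContinuousLinearMap.one_apply, PiLp.smul_apply,
      smul_eq_mul, EuclideanSpace.single_apply]
    by_cases hmn : m = n
    · subst hmn
      simp only [sub_self, if_pos rfl]
      rw [← Finset.mul_sum]
      have hre : (∑ lam : ZMod d,
          projCoh K0 (EuclideanSpace.single (m - lam) (1 : ℂ)) (m - lam))
          = ∑ p : ZMod d, projCoh K0 (EuclideanSpace.single p (1 : ℂ)) p :=
        Fintype.sum_equiv (Equiv.subLeft m) _ _ (fun lam => rfl)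
      rw [hre, sum_proj_diag, hrank, if_pos trivial, if_pos trivial]
      ring
    · have hsub : m - n ≠ 0 := sub_ne_zero.mpr hmn
      simp [hsub, hmn]
  rw [hS, smul_smul, inv_mul_cancel₀, one_smul]
  exact mul_ne_zero (Nat.cast_ne_zero.2 (by omega)) (Nat.cast_ne_zero.2 (NeZero.ne d))
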